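/- Suppose φ satisfies Assumption (A) with s > d, and fix z > 0, β > 0 and a bounded measurable Λ ⊂ ℝ^d. Then lim_{a→0} Z_Λ^(−)(z,β,a) / Z_Λ(z,β) = 1. -/

import Mathlib

open MeasureTheory Filter Topology Set
open scoped BigOperators ENNReal NNReal

noncomputable section

attribute [local instance] Classical.propDecidable

/-- Points of `ℝ^d` (Euclidean space). -/
abbrev Pt (d : ℕ) : Type := EuclideanSpace ℝ (Fin d)

/-- The index `r ∈ ℤ^d` of the cube `Δ_a(r)` of the partition `Δ̄_a` containing `x`:
for `a > 0` we have `cubeIdx d a x = r ↔ ∀ i, a*(r i - 1/2) ≤ x i ∧ x i < a*(r i + 1/2)`. -/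
def cubeIdx (d : ℕ) (a : ℝ) (x : Pt d) : Fin d → ℤ := fun i => ⌊x i / a + 1/2⌋

/-- `φ⁺(t) = max {0, φ(t)}`. -/
def phiPlus (φ : ℝ → ℝ) (t : ℝ) : ℝ := max (φ t) 0

/-- `φ⁻(t) = -min {0, φ(t)}`. -/
def phiMinus (φ : ℝ → ℝ) (t : ℝ) : ℝ := max (-(φ t)) 0

/-- Energy `U(γ) = Σ_{{x,y}⊂γ} φ(|x-y|)` of a finite configuration. -/
def energy (d : ℕ) (φ : ℝ → ℝ) (γ : Finset (Pt d)) : ℝ :=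
  (∑ p ∈ γ.offDiag, φ (dist p.1 p.2)) / 2

/-- Interaction energy `W(η;γ) = Σ_{x∈η} Σ_{y∈γ} φ(|x-y|)`. -/
def interW (d : ℕ) (φ : ℝ → ℝ) (η γ : Finset (Pt d)) : ℝ :=
  ∑ x ∈ η, ∑ y ∈ γ, φ (dist x y)

/-- Number of points of `γ` in the cube `Δ_a(r)`, i.e. `|γ_Δ|`. -/
def cubeCount (d : ℕ) (a : ℝ) (γ : Finset (Pt d)) (r : Fin d → ℤ) : ℕ :=
  (γ.filter fun x => cubeIdx d a x = r).card

/-- `Σ_{Δ ∈ Δ̄_a : |γ_Δ| ≥ 2} |γ_Δ|²`. -/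
def densSum (d : ℕ) (a : ℝ) (γ : Finset (Pt d)) : ℝ :=
  ∑ r ∈ γ.image (cubeIdx d a),
    if 2 ≤ cubeCount d a γ r then (cubeCount d a γ r : ℝ) ^ 2 else 0

/-- `b(a) = inf {φ⁺(|x-y|) : x ≠ y lie in one common cube of Δ̄_a}`. -/
def bVal (d : ℕ) (φ : ℝ → ℝ) (a : ℝ) : ℝ :=
  sInf {t : ℝ | ∃ x y : Pt d, x ≠ y ∧ cubeIdx d a x = cubeIdx d a y ∧ t = phiPlus φ (dist x y)}

/-- `v₀(a) = Σ_{Δ'∈Δ̄_a} sup_{x∈Δ₀} sup_{y∈Δ'} φ⁻(|x-y|)` (valued in `ℝ≥0∞`). -/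
def v0E (d : ℕ) (φ : ℝ → ℝ) (a : ℝ) : ℝ≥0∞ :=
  ∑' r : Fin d → ℤ,
    ⨆ x ∈ {x : Pt d | cubeIdx d a x = 0}, ⨆ y ∈ {y : Pt d | cubeIdx d a y = r},
      ENNReal.ofReal (phiMinus φ (dist x y))

/-- Real value of `v₀(a)`. -/
def v0Val (d : ℕ) (φ : ℝ → ℝ) (a : ℝ) : ℝ := (v0E d φ a).toReal

/-- Assumption (A) on the interaction potential. -/
structure AssumptionA (d : ℕ) (φ : ℝ → ℝ) (r₀ R φ₀ φ₁ ε₀ s : ℝ) : Prop where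
  cont : ContinuousOn φ (Set.Ioi (0 : ℝ))
  r0_pos : 0 < r₀
  R_gt : r₀ < R
  phi0_pos : 0 < φ₀
  phi1_pos : 0 < φ₁
  eps0_pos : 0 < ε₀
  s_ge : (d : ℝ) ≤ s
  decay : ∀ t : ℝ, R ≤ t → -(φ₁ / t ^ ((d : ℝ) + ε₀)) ≤ φ t
  core : ∀ t : ℝ, 0 < t → t ≤ r₀ → φ₀ / t ^ s ≤ φ t

/-- `χ₋^a(γ) = 1` iff no cube of `Δ̄_a` contains two or more points of `γ`. -/
def chiM (d : ℕ) (a : ℝ) (γ : Finset (Pt d)) : ℝ :=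
  if ∀ x ∈ γ, ∀ y ∈ γ, cubeIdx d a x = cubeIdx d a y → x = y then 1 else 0

/-- The finite configuration `{y₁,…,y_n}`. -/
def confOf {d n : ℕ} (y : Fin n → Pt d) : Finset (Pt d) := Finset.image y Finset.univ

/-- Weighted grand partition function `1 + Σ_{n≥1} (zⁿ/n!) ∫_{Λⁿ} e^{-βU({x₁,…,xₙ})} w({x₁,…,xₙ})`. -/
def ZW (d : ℕ) (φ : ℝ → ℝ) (z β : ℝ) (Λ : Set (Pt d)) (w : Finset (Pt d) → ℝ) : ℝ :=
  1 + ∑' n : ℕ, (z ^ (n + 1) / (n + 1).factorial) *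
    ∫ y in {y : Fin (n + 1) → Pt d | ∀ i, y i ∈ Λ},
      Real.exp (-β * energy d φ (confOf y)) * w (confOf y)

/-- Grand partition function `Z_Λ(z,β)`. -/
def ZΛ (d : ℕ) (φ : ℝ → ℝ) (z β : ℝ) (Λ : Set (Pt d)) : ℝ := ZW d φ z β Λ fun _ => 1

/-- Dilute (quasi-lattice approximated) partition function `Z_Λ^{(-)}(z,β,a)`. -/
def ZΛm (d : ℕ) (φ : ℝ → ℝ) (z β a : ℝ) (Λ : Set (Pt d)) : ℝ := ZW d φ z β Λ (chiM d a)

/-- `Σ_{n≥0} (zⁿ/n!) ∫_{Λⁿ} e^{-βU(η∪{y₁,…,y_n})} w(η∪{y₁,…,y_n})`. -/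
def corrInt (d : ℕ) (φ : ℝ → ℝ) (z β : ℝ) (Λ : Set (Pt d)) (η : Finset (Pt d))
    (w : Finset (Pt d) → ℝ) : ℝ :=
  Real.exp (-β * energy d φ η) * w η +
  ∑' n : ℕ, (z ^ (n + 1) / (n + 1).factorial) *
    ∫ y in {y : Fin (n + 1) → Pt d | ∀ i, y i ∈ Λ},
      Real.exp (-β * energy d φ (η ∪ confOf y)) * w (η ∪ confOf y)

/-- Finite-volume correlation function `ρ_Λ(η;z,β)`. -/
def rhoΛ (d : ℕ) (φ : ℝ → ℝ) (z β : ℝ) (Λ : Set (Pt d)) (η : Finset (Pt d)) : ℝ :=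
  z ^ η.card / ZΛ d φ z β Λ * corrInt d φ z β Λ η fun _ => 1

/-- Approximated correlation function `ρ_Λ^{(-)}(η;z,β,a)`. -/
def rhoΛm (d : ℕ) (φ : ℝ → ℝ) (z β a : ℝ) (Λ : Set (Pt d)) (η : Finset (Pt d)) : ℝ :=
  z ^ η.card / ZΛm d φ z β a Λ * corrInt d φ z β Λ η (chiM d a)

/-- `ε₁(a)`. -/
def eps1 (d : ℕ) (φ : ℝ → ℝ) (z β a : ℝ) : ℝ :=
  1/2 * z^2 * a^(2*d) * Real.exp (-β * (bVal d φ a - 5 * v0Val d φ a)) *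
    Real.exp (z * a^d * Real.exp (-β * (bVal d φ a - 3 * v0Val d φ a)))

/-- The cube `[-L/2, L/2)^d`. -/
def boxHalf (d : ℕ) (L : ℝ) : Set (Pt d) := {x | ∀ i, -(L/2) ≤ x i ∧ x i < L/2}

/-- The cube `Λ_l = [-a(l+1/2), a(l+1/2))^d`, a union of cubes of `Δ̄_a`. -/
def boxLat (d : ℕ) (a : ℝ) (l : ℕ) : Set (Pt d) :=
  {x | ∀ i, -(a*(l+1/2)) ≤ x i ∧ x i < a*(l+1/2)}

/-- Under Assumption (A), `φ` is bounded below on `(0,∞)`. -/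
lemma phi_lower_bound (d : ℕ) (φ : ℝ → ℝ) (r₀ R φ₀ φ₁ ε₀ s : ℝ)
    (hA : AssumptionA d φ r₀ R φ₀ φ₁ ε₀ s) :
    ∃ M : ℝ, 0 ≤ M ∧ ∀ t : ℝ, 0 < t → -M ≤ φ t := by
  obtain ⟨cont, hr₀, hrR, hφ₀, hφ₁, hε₀, hs, hdec, hcore⟩ := hA
  -- minimum on [r₀, R]
  have hcomp : IsCompact (Set.Icc r₀ R) := isCompact_Icc
  have hsub : Set.Icc r₀ R ⊆ Set.Ioi (0:ℝ) := fun t ht => lt_of_lt_of_le hr₀ ht.1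
  obtain ⟨t₀, ht₀mem, ht₀min⟩ :=
    hcomp.exists_isMinOn (Set.nonempty_Icc.2 hrR.le) (cont.mono hsub)
  set M : ℝ := max (max (-(φ t₀)) (φ₁ / R ^ ((d:ℝ) + ε₀))) 0 with hM
  refine ⟨M, le_max_right _ _, fun t ht => ?_⟩
  rcases le_or_gt t r₀ with h1 | h1
  · have : 0 < φ₀ / t ^ s := div_pos hφ₀ (Real.rpow_pos_of_pos ht s)
    have := (hcore t ht h1).trans' this.le
    calc -M ≤ 0 := neg_nonpos_of_nonneg (le_max_right _ _)
    _ ≤ φ t := le_trans (div_pos hφ₀ (Real.rpow_pos_of_pos ht s)).le (hcore t ht h1)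
  · rcases le_or_gt t R with h2 | h2
    · have : φ t₀ ≤ φ t := ht₀min ⟨h1.le, h2⟩
      have h3 : -M ≤ φ t₀ := by
        have : -(φ t₀) ≤ M := le_max_of_le_left (le_max_left _ _)
        linarith
      linarith
    · have hR0 : 0 < R := lt_trans hr₀ hrR
      have hp : (0:ℝ) < (d:ℝ) + ε₀ := by positivity
      have h4 : φ₁ / t ^ ((d:ℝ) + ε₀) ≤ φ₁ / R ^ ((d:ℝ) + ε₀) := by
        apply div_le_div_of_nonneg_left hφ₁.le (Real.rpow_pos_of_pos hR0 _)
        exact Real.rpow_le_rpow hR0.le h2.le hp.le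
      have h5 := hdec t h2.le
      have h6 : φ₁ / R ^ ((d:ℝ) + ε₀) ≤ M := le_max_of_le_left (le_max_right _ _)
      linarith
lemma abs_coord_le_norm {d : ℕ} (x : Pt d) (i : Fin d) : |x i| ≤ ‖x‖ := by
  rw [EuclideanSpace.norm_eq]
  rw [← Real.sqrt_sq_eq_abs]
  apply Real.sqrt_le_sqrt
  rw [← Finset.sum_erase_add _ _ (Finset.mem_univ i)]
  have h := Finset.sum_nonneg (fun j (_ : j ∈ (Finset.univ : Finset (Fin d)).erase i) =>
    (by positivity : (0:ℝ) ≤ ‖x j‖ ^ 2))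
  have h2 : x i ^ 2 = ‖x i‖ ^ 2 := by simp [Real.norm_eq_abs, sq_abs]
  nlinarith

lemma same_cube_dist {d : ℕ} {a : ℝ} (ha : 0 < a) {x y : Pt d}
    (h : cubeIdx d a x = cubeIdx d a y) : dist x y ≤ a * Real.sqrt d := by
  have hcoord : ∀ i : Fin d, |x i - y i| ≤ a := by
    intro i
    have hi : ⌊x i / a + 1/2⌋ = ⌊y i / a + 1/2⌋ := congrFun h i
    have h1 : |(x i / a + 1/2) - (y i / a + 1/2)| < 1 :=
      Int.abs_sub_lt_one_of_floor_eq_floor hi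
    have h2 : |x i / a - y i / a| < 1 := by
      have he : (x i / a + 1/2) - (y i / a + 1/2) = x i / a - y i / a := by ring
      rwa [he] at h1
    have h3 : |x i - y i| / a < 1 := by
      rwa [div_sub_div_same, abs_div, abs_of_pos ha] at h2
    have := (div_lt_one ha).mp h3
    linarith
  rw [EuclideanSpace.dist_eq x y]
  have hsum : (∑ i, dist (x i) (y i) ^ 2) ≤ (d : ℝ) * a ^ 2 := by
    calc (∑ i, dist (x i) (y i) ^ 2) ≤ ∑ _i : Fin d, a ^ 2 := by
          apply Finset.sum_le_sum
          intro i _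
          rw [Real.dist_eq]
          calc |x i - y i| ^ 2 = |x i - y i| ^ 2 := rfl
            _ ≤ a ^ 2 := by
              apply pow_le_pow_left₀ (abs_nonneg _) (hcoord i)
      _ = (d : ℝ) * a ^ 2 := by simp [Finset.sum_const, mul_comm]
  calc Real.sqrt (∑ i, dist (x i) (y i) ^ 2) ≤ Real.sqrt ((d:ℝ) * a ^ 2) :=
        Real.sqrt_le_sqrt hsum
    _ = a * Real.sqrt d := by
        rw [Real.sqrt_mul (Nat.cast_nonneg d), Real.sqrt_sq ha.le, mul_comm]

lemma cube_image_card {d : ℕ} {a D : ℝ} (ha : 0 < a) (hD : 0 ≤ D)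
    (γ : Finset (Pt d)) (hγ : ∀ x ∈ γ, ‖x‖ ≤ D) :
    ((γ.image (cubeIdx d a)).card : ℝ) ≤ (2*(D/a) + 7) ^ d := by
  set K : ℤ := ⌈D/a⌉ + 2 with hK
  have hDa : (0:ℝ) ≤ D / a := div_nonneg hD ha.le
  have hKR : (K : ℝ) ≤ D/a + 3 := by
    have := Int.ceil_lt_add_one (D/a)
    push_cast [hK]
    linarith
  have hKc : (K:ℝ) = ((⌈D/a⌉:ℤ):ℝ) + 2 := by push_cast [hK]; ring
  have hKmem : ∀ x ∈ γ, cubeIdx d a x ∈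
      Fintype.piFinset (fun _ : Fin d => Finset.Icc (-K) K) := by
    intro x hx
    rw [Fintype.mem_piFinset]
    intro i
    rw [Finset.mem_Icc]
    have hxi : |x i| ≤ D := (abs_coord_le_norm x i).trans (hγ x hx)
    have hxa : -(D/a) ≤ x i / a ∧ x i / a ≤ D / a := by
      have h1 := (abs_le.mp hxi).1
      have h2 := (abs_le.mp hxi).2
      constructor
      · have := (div_le_div_iff_of_pos_right ha).mpr h1
        rwa [neg_div] at this
      · exact (div_le_div_iff_of_pos_right ha).mpr h2
    constructor
    · show -K ≤ ⌊x i / a + 1/2⌋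
      rw [Int.le_floor]
      push_cast
      have : (D/a) ≤ (⌈D/a⌉ : ℝ) := Int.le_ceil _
      linarith [hxa.1, hKc]
    · show ⌊x i / a + 1/2⌋ ≤ K
      have hle : (⌊x i / a + 1/2⌋ : ℤ) ≤ ⌊(K:ℝ)⌋ := by
        apply Int.floor_le_floor
        have : (D/a) ≤ (⌈D/a⌉ : ℝ) := Int.le_ceil _
        push_cast [hK]
        linarith [hxa.2]
      simpa using hle
  have hsub : γ.image (cubeIdx d a) ⊆ Fintype.piFinset (fun _ : Fin d => Finset.Icc (-K) K) := by
    intro r hr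
    obtain ⟨x, hx, rfl⟩ := Finset.mem_image.mp hr
    exact hKmem x hx
  have hcard := Finset.card_le_card hsub
  have hpi : (Fintype.piFinset (fun _ : Fin d => Finset.Icc (-K) K)).card
      = (Finset.Icc (-K) K).card ^ d := by
    rw [Fintype.card_piFinset]
    simp
  have hIcc : ((Finset.Icc (-K) K).card : ℝ) ≤ 2*(D/a) + 7 := by
    rw [Int.card_Icc]
    have hKnn : (0:ℤ) ≤ K + 1 - -K := by
      have : (0:ℤ) ≤ ⌈D/a⌉ := Int.ceil_nonneg hDa
      omega
    have h2K : ((K + 1 - -K).toNat : ℝ) = 2*(K:ℝ) + 1 := by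
      have h := congrArg (Int.cast : ℤ → ℝ) (Int.toNat_of_nonneg hKnn)
      push_cast at h
      linarith
    linarith [h2K, hKR]
  calc ((γ.image (cubeIdx d a)).card : ℝ)
      ≤ ((Fintype.piFinset (fun _ : Fin d => Finset.Icc (-K) K)).card : ℝ) := by
        exact_mod_cast hcard
    _ = ((Finset.Icc (-K) K).card : ℝ) ^ d := by rw [hpi]; push_cast; ring
    _ ≤ (2*(D/a) + 7) ^ d := by
        apply pow_le_pow_left₀ (Nat.cast_nonneg _) hIcc
/-- Fiberwise counting: sum over the off-diagonal of the same-cube indicator. -/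
lemma offDiag_same_sum {d : ℕ} (a : ℝ) (γ : Finset (Pt d)) :
    (∑ p ∈ γ.offDiag, (if cubeIdx d a p.1 = cubeIdx d a p.2 then (1:ℝ) else 0))
      = (∑ r ∈ γ.image (cubeIdx d a), ((γ.filter fun x => cubeIdx d a x = r).card : ℝ)^2)
        - γ.card := by
  classical
  set q := cubeIdx d a
  set f : Pt d × Pt d → ℝ := fun p => if q p.1 = q p.2 then (1:ℝ) else 0 with hf
  have hsplit : ∑ p ∈ γ ×ˢ γ, f p = ∑ p ∈ γ.diag, f p + ∑ p ∈ γ.offDiag, f p := by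
    rw [← Finset.diag_union_offDiag, Finset.sum_union (Finset.disjoint_diag_offDiag γ)]
  have hdiag : ∑ p ∈ γ.diag, f p = (γ.card : ℝ) := by
    have : ∀ p ∈ γ.diag, f p = 1 := by
      intro p hp
      have := (Finset.mem_diag.mp hp).2
      simp [hf, this]
    rw [Finset.sum_congr rfl this]
    simp [Finset.diag_card]
  have hprod : ∑ p ∈ γ ×ˢ γ, f p
      = ∑ x ∈ γ, ((γ.filter fun y => q y = q x).card : ℝ) := by
    rw [Finset.sum_product]
    apply Finset.sum_congr rfl
    intro x _
    have : ∑ y ∈ γ, f (x, y) = ∑ y ∈ γ, (if q y = q x then (1:ℝ) else 0) := by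
      apply Finset.sum_congr rfl
      intro y _
      simp only [hf]
      exact if_congr ⟨Eq.symm, Eq.symm⟩ rfl rfl
    rw [this, Finset.sum_boole]
  have hfib : ∑ x ∈ γ, ((γ.filter fun y => q y = q x).card : ℝ)
      = ∑ r ∈ γ.image q, ((γ.filter fun x => q x = r).card : ℝ)^2 := by
    rw [← Finset.sum_fiberwise_of_maps_to (fun x hx => Finset.mem_image_of_mem q hx)
      (fun x => ((γ.filter fun y => q y = q x).card : ℝ))]
    apply Finset.sum_congr rfl
    intro r _
    have : ∀ x ∈ γ.filter fun x => q x = r,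
        ((γ.filter fun y => q y = q x).card : ℝ) = ((γ.filter fun x => q x = r).card : ℝ) := by
      intro x hx
      have hqx : q x = r := (Finset.mem_filter.mp hx).2
      rw [hqx]
    rw [Finset.sum_congr rfl this, Finset.sum_const, sq]
    simp [mul_comm]
  rw [hdiag, hprod, hfib] at hsplit
  linarith
set_option maxHeartbeats 1000000 in
/-- Uniform lower bound on the energy of configurations in a bounded region
(superstability-type estimate, crude version sufficient for bounded volumes). -/
lemma energy_lower_bound (d : ℕ) (hd : 1 ≤ d) (φ : ℝ → ℝ)
    (r₀ R φ₀ φ₁ ε₀ s : ℝ) (hA : AssumptionA d φ r₀ R φ₀ φ₁ ε₀ s) (hs : (d : ℝ) < s)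
    (Λ : Set (Pt d)) (hΛb : Bornology.IsBounded Λ) :
    ∃ C₀ : ℝ, 0 ≤ C₀ ∧ ∀ γ : Finset (Pt d), ↑γ ⊆ Λ → -C₀ ≤ energy d φ γ := by
  classical
  obtain ⟨M, hM0, hMlb⟩ := phi_lower_bound d φ r₀ R φ₀ φ₁ ε₀ s hA
  obtain ⟨D', hD'⟩ := hΛb.subset_closedBall 0
  set D : ℝ := max D' 0 with hDdef
  have hD0 : 0 ≤ D := le_max_right _ _
  have hΛD : Λ ⊆ Metric.closedBall 0 D :=
    hD'.trans (Metric.closedBall_subset_closedBall (le_max_left _ _))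
  set sqd : ℝ := Real.sqrt d with hsqddef
  have hsqd1 : 1 ≤ sqd := by
    rw [hsqddef, show (1:ℝ) = Real.sqrt 1 by rw [Real.sqrt_one]]
    exact Real.sqrt_le_sqrt (by exact_mod_cast hd)
  have hsqd0 : 0 < sqd := lt_of_lt_of_le one_pos hsqd1
  set A : ℝ := 8*D + 8 with hAdef
  have hA0 : 0 < A := by positivity
  have h2DA : 2*D/A ≤ 1/4 := by
    rw [div_le_iff₀ hA0]; rw [hAdef]; linarith
  have hd0 : (0:ℝ) < d := by exact_mod_cast hd
  have hs0 : (0:ℝ) < s := lt_of_le_of_lt (Nat.cast_nonneg d) hs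
  set t : ℕ → ℝ := fun n => (n:ℝ) ^ ((1:ℝ)/(d:ℝ)) with htdef
  have ht0 : ∀ n : ℕ, 1 ≤ n → 1 ≤ t n := by
    intro n hn
    apply Real.one_le_rpow (by exact_mod_cast hn) (by positivity)
  have htd : ∀ n : ℕ, (t n) ^ (d:ℕ) = (n:ℝ) := by
    intro n
    rw [htdef]
    rw [← Real.rpow_natCast ((n:ℝ) ^ ((1:ℝ)/(d:ℝ))) d, ← Real.rpow_mul (Nat.cast_nonneg n)]
    rw [show (1:ℝ)/(d:ℝ) * (d:ℕ) = 1 by field_simp]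
    exact Real.rpow_one _
  have htt : Tendsto t atTop atTop :=
    (tendsto_rpow_atTop (by positivity : (0:ℝ) < 1/(d:ℝ))).comp
      tendsto_natCast_atTop_atTop
  have ev1 : ∀ᶠ n : ℕ in atTop, 28 ≤ t n := htt.eventually_ge_atTop 28
  have ev2 : ∀ᶠ n : ℕ in atTop, A * sqd / r₀ ≤ t n := htt.eventually_ge_atTop _
  have ev3 : ∀ᶠ n : ℕ in atTop, (M+1) * (A*sqd)^s / φ₀ ≤ (t n) ^ (s - (d:ℝ)) :=
    ((tendsto_rpow_atTop (by linarith : (0:ℝ) < s - d)).comp htt).eventually_ge_atTop _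
  have ev4 : ∀ᶠ n : ℕ in atTop, 1 ≤ n := eventually_ge_atTop 1
  obtain ⟨n₁, hn₁⟩ := (ev1.and (ev2.and (ev3.and ev4))).exists_forall_of_atTop
  refine ⟨(M+1) * ((n₁:ℝ)+1)^2, by positivity, ?_⟩
  intro γ hγΛ
  set n : ℕ := γ.card with hn
  have key : ∀ p ∈ γ.offDiag, -M ≤ φ (dist p.1 p.2) := by
    intro p hp
    have hne : p.1 ≠ p.2 := (Finset.mem_offDiag.mp hp).2.2
    exact hMlb _ (dist_pos.mpr hne)
  have hoffcard : (γ.offDiag.card : ℝ) ≤ ((n:ℝ))^2 := by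
    have hh : γ.offDiag.card ≤ n * n := by
      rw [Finset.offDiag_card, ← hn]; omega
    calc ((γ.offDiag.card : ℕ) : ℝ) ≤ ((n*n : ℕ):ℝ) := by exact_mod_cast hh
      _ = ((n:ℝ))^2 := by push_cast; ring
  rcases lt_or_ge n n₁ with hcase | hcase
  · -- few points: crude bound
    have h1 : -(M * ((n:ℝ))^2) ≤ ∑ p ∈ γ.offDiag, φ (dist p.1 p.2) := by
      have h2 : ∑ p ∈ γ.offDiag, (-M) ≤ ∑ p ∈ γ.offDiag, φ (dist p.1 p.2) :=
        Finset.sum_le_sum key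
      have h3 : ∑ p ∈ γ.offDiag, (-M) = -(M * (γ.offDiag.card : ℝ)) := by
        rw [Finset.sum_const, nsmul_eq_mul]; ring
      nlinarith
    have h5 : ((n:ℝ))^2 ≤ ((n₁:ℝ)+1)^2 := by
      have h6 : (n:ℝ) ≤ (n₁:ℝ) + 1 := by
        have : (n:ℝ) ≤ (n₁:ℝ) := by exact_mod_cast hcase.le
        linarith
      nlinarith [Nat.cast_nonneg (α := ℝ) n]
    simp only [energy]
    nlinarith
  · -- many points: the core repulsion dominates
    obtain ⟨h28, hAr, hC3, hn1⟩ := hn₁ n hcase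
    set tn : ℝ := t n with htn
    have htn1 : 1 ≤ tn := ht0 n hn1
    have htnpos : 0 < tn := lt_of_lt_of_le one_pos htn1
    set a : ℝ := A / tn with ha
    have hapos : 0 < a := div_pos hA0 htnpos
    set c : ℝ := φ₀ / (a * sqd) ^ s with hc
    have hasq : 0 < a * sqd := by positivity
    have hcpos : 0 < c := div_pos hA.phi0_pos (Real.rpow_pos_of_pos hasq s)
    have hn1R : (1:ℝ) ≤ (n:ℝ) := by exact_mod_cast hn1
    have hnpos : (0:ℝ) < (n:ℝ) := lt_of_lt_of_le one_pos hn1R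
    -- (C1) cubes are smaller than the core range
    have hC1 : a * sqd ≤ r₀ := by
      rw [ha, div_mul_eq_mul_div, div_le_iff₀ htnpos]
      calc A * sqd ≤ r₀ * (A * sqd / r₀) := by
            rw [mul_div_assoc']
            rw [mul_comm r₀ (A * sqd), mul_div_assoc, div_self (ne_of_gt hA.r0_pos)]
            simp
        _ ≤ r₀ * tn := mul_le_mul_of_nonneg_left hAr hA.r0_pos.le
    -- (C2) few cubes
    have hNb : ((γ.image (cubeIdx d a)).card : ℝ) ≤ (n:ℝ)/2 := by
      have hnorm : ∀ x ∈ γ, ‖x‖ ≤ D := by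
        intro x hx
        have := hΛD (hγΛ hx)
        rwa [Metric.mem_closedBall, dist_zero_right] at this
      have h6 := cube_image_card hapos hD0 γ hnorm
      have h7 : 2*(D/a) + 7 ≤ tn/2 := by
        have he : D/a = D * tn / A := by rw [ha]; field_simp
        rw [he]
        have h8 : 2*(D * tn / A) ≤ tn/4 := by
          have he2 : 2*(D * tn / A) = (2*D/A) * tn := by ring
          rw [he2]
          calc (2*D/A) * tn ≤ (1/4) * tn :=
                mul_le_mul_of_nonneg_right h2DA htnpos.le
            _ = tn/4 := by ring
        linarith
      have h9 : (2*(D/a) + 7)^d ≤ (tn/2)^d := by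
        apply pow_le_pow_left₀ (by positivity) h7
      have h10 : (tn/2)^d ≤ (n:ℝ)/2 := by
        rw [div_pow, htd n]
        apply div_le_div_of_nonneg_left (Nat.cast_nonneg n) (by positivity)
        calc (2:ℝ) = 2^1 := (pow_one 2).symm
          _ ≤ 2^d := pow_le_pow_right₀ one_le_two hd
      exact h6.trans (h9.trans h10)
    -- (C3) the core gain beats all losses
    have hC3' : (M+1) * (n:ℝ) ≤ c := by
      have hXP : (M+1) * (A*sqd)^s ≤ (tn ^ (s - (d:ℝ))) * φ₀ := by
        rw [div_le_iff₀ hA.phi0_pos] at hC3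
        linarith
      have hcalc : c = φ₀ * tn ^ s / (A*sqd)^s := by
        rw [hc, ha]
        rw [div_mul_eq_mul_div, Real.div_rpow (by positivity) htnpos.le]
        rw [div_div_eq_mul_div]
      have hts : tn ^ s = tn ^ (s - (d:ℝ)) * tn ^ ((d:ℝ)) := by
        rw [← Real.rpow_add htnpos, sub_add_cancel]
      have htdn : tn ^ ((d:ℝ)) = (n:ℝ) := by
        rw [Real.rpow_natCast]; exact htd n
      have hPpos : (0:ℝ) < (A*sqd)^s := Real.rpow_pos_of_pos (by positivity) s
      rw [hcalc, hts, htdn, le_div_iff₀ hPpos]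
      linarith [mul_le_mul_of_nonneg_right hXP hnpos.le]
    -- pointwise bound on pairs
    have hpair : ∀ p ∈ γ.offDiag,
        (if cubeIdx d a p.1 = cubeIdx d a p.2 then c else -M) ≤ φ (dist p.1 p.2) := by
      intro p hp
      have hne : p.1 ≠ p.2 := (Finset.mem_offDiag.mp hp).2.2
      have hdpos : 0 < dist p.1 p.2 := dist_pos.mpr hne
      by_cases hsame : cubeIdx d a p.1 = cubeIdx d a p.2
      · rw [if_pos hsame]
        have hdle : dist p.1 p.2 ≤ a * sqd := same_cube_dist hapos hsame
        have hdr : dist p.1 p.2 ≤ r₀ := hdle.trans hC1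
        have h11 : c ≤ φ₀ / (dist p.1 p.2) ^ s := by
          rw [hc]
          apply div_le_div_of_nonneg_left hA.phi0_pos.le (Real.rpow_pos_of_pos hdpos s)
          exact Real.rpow_le_rpow hdpos.le hdle hs0.le
        exact h11.trans (hA.core _ hdpos hdr)
      · rw [if_neg hsame]
        exact hMlb _ hdpos
    have hsum1 : ∑ p ∈ γ.offDiag, (if cubeIdx d a p.1 = cubeIdx d a p.2 then c else -M)
        ≤ ∑ p ∈ γ.offDiag, φ (dist p.1 p.2) := Finset.sum_le_sum hpair
    have hsum2 : ∑ p ∈ γ.offDiag, (if cubeIdx d a p.1 = cubeIdx d a p.2 then c else -M)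
        = (c + M) * (∑ p ∈ γ.offDiag, (if cubeIdx d a p.1 = cubeIdx d a p.2 then (1:ℝ) else 0))
          - M * (γ.offDiag.card : ℝ) := by
      have hpt : ∀ p : Pt d × Pt d, (if cubeIdx d a p.1 = cubeIdx d a p.2 then c else -M)
          = (c + M) * (if cubeIdx d a p.1 = cubeIdx d a p.2 then (1:ℝ) else 0) - M := by
        intro p
        by_cases h : cubeIdx d a p.1 = cubeIdx d a p.2 <;> simp [h]
      rw [Finset.sum_congr rfl (fun p _ => hpt p), Finset.sum_sub_distrib,
        ← Finset.mul_sum, Finset.sum_const, nsmul_eq_mul]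
      ring
    have hPid := offDiag_same_sum a γ
    have hfib : (n:ℝ) = ∑ r ∈ γ.image (cubeIdx d a),
        ((γ.filter fun x => cubeIdx d a x = r).card : ℝ) := by
      have hcf := Finset.card_eq_sum_card_fiberwise
        (f := cubeIdx d a) (s := γ) (t := γ.image (cubeIdx d a))
        (fun x hx => Finset.mem_image_of_mem (cubeIdx d a) hx)
      rw [hn]
      exact_mod_cast congrArg (Nat.cast : ℕ → ℝ) hcf
    have hCS : ((n:ℝ))^2 ≤ ((γ.image (cubeIdx d a)).card : ℝ)
        * ∑ r ∈ γ.image (cubeIdx d a), ((γ.filter fun x => cubeIdx d a x = r).card : ℝ)^2 := by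
      rw [hfib]
      exact sq_sum_le_card_mul_sum_sq
    have hSq0 : 0 ≤ ∑ r ∈ γ.image (cubeIdx d a),
        ((γ.filter fun x => cubeIdx d a x = r).card : ℝ)^2 :=
      Finset.sum_nonneg fun r _ => sq_nonneg _
    have hSq : 2*(n:ℝ) ≤ ∑ r ∈ γ.image (cubeIdx d a),
        ((γ.filter fun x => cubeIdx d a x = r).card : ℝ)^2 := by
      have hns : (n:ℝ) * (2*(n:ℝ)) ≤ (n:ℝ) * (∑ r ∈ γ.image (cubeIdx d a),
          ((γ.filter fun x => cubeIdx d a x = r).card : ℝ)^2) := by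
        nlinarith [mul_nonneg (sub_nonneg.mpr hNb) hSq0]
      exact (mul_le_mul_iff_of_pos_left hnpos).mp hns
    have hPge : (n:ℝ) ≤ ∑ p ∈ γ.offDiag,
        (if cubeIdx d a p.1 = cubeIdx d a p.2 then (1:ℝ) else 0) := by
      rw [hPid, ← hn]
      linarith
    have h13 : (c+M)*(n:ℝ) ≤ (c+M) * ∑ p ∈ γ.offDiag,
        (if cubeIdx d a p.1 = cubeIdx d a p.2 then (1:ℝ) else 0) :=
      mul_le_mul_of_nonneg_left hPge (by positivity)
    have h14 : ((M+1)*(n:ℝ))*(n:ℝ) ≤ c*(n:ℝ) :=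
      mul_le_mul_of_nonneg_right hC3' hnpos.le
    have hfinal : 0 ≤ ∑ p ∈ γ.offDiag, φ (dist p.1 p.2) := by
      nlinarith [hsum1, hsum2, h13, h14, hoffcard, hM0, hn1R]
    simp only [energy]
    have : 0 ≤ (M+1) * ((n₁:ℝ)+1)^2 := by positivity
    linarith
lemma measS {d : ℕ} (m : ℕ) {Λ : Set (Pt d)} (hΛm : MeasurableSet Λ) :
    MeasurableSet {y : Fin m → Pt d | ∀ i, y i ∈ Λ} := by
  have he : {y : Fin m → Pt d | ∀ i, y i ∈ Λ} = Set.pi Set.univ (fun _ => Λ) := by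
    ext y; simp [Set.mem_pi]
  rw [he]
  exact MeasurableSet.pi countable_univ (fun i _ => hΛm)

lemma volS {d : ℕ} (m : ℕ) (Λ : Set (Pt d)) :
    volume {y : Fin m → Pt d | ∀ i, y i ∈ Λ} = volume Λ ^ m := by
  have he : {y : Fin m → Pt d | ∀ i, y i ∈ Λ} = Set.pi Set.univ (fun _ => Λ) := by
    ext y; simp [Set.mem_pi]
  rw [he, volume_pi_pi]
  simp

lemma ae_pairwise_ne (d : ℕ) (hd : 1 ≤ d) (m : ℕ) :
    ∀ᵐ y : Fin m → Pt d, ∀ i j : Fin m, i ≠ j → y i ≠ y j := by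
  haveI : Nonempty (Fin d) := ⟨⟨0, hd⟩⟩
  haveI : Measure.IsAddHaarMeasure (volume : Measure (Fin m → Pt d)) := by constructor
  rw [ae_all_iff]
  intro i
  rw [ae_all_iff]
  intro j
  by_cases hij : i = j
  · exact Filter.Eventually.of_forall fun y h => absurd hij h
  · have hnull : volume {y : Fin m → Pt d | y i = y j} = 0 := by
      set lin : (Fin m → Pt d) →ₗ[ℝ] Pt d := (LinearMap.proj i : (Fin m → Pt d) →ₗ[ℝ] Pt d) - (LinearMap.proj j : (Fin m → Pt d) →ₗ[ℝ] Pt d) with hlin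
      have hset : {y : Fin m → Pt d | y i = y j} = ↑(LinearMap.ker lin) := by
        ext y
        simp only [Set.mem_setOf_eq, SetLike.mem_coe, LinearMap.mem_ker, hlin,
          LinearMap.sub_apply, LinearMap.proj_apply, sub_eq_zero]
      obtain ⟨v, hv⟩ := exists_ne (0 : Pt d)
      have hker : LinearMap.ker lin ≠ ⊤ := by
        intro htop
        have hmem : (Pi.single i v : Fin m → Pt d) ∈ LinearMap.ker lin := by
          rw [htop]; trivial
        rw [LinearMap.mem_ker, hlin] at hmem
        simp only [LinearMap.sub_apply, LinearMap.proj_apply] at hmem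
        rw [Pi.single_eq_same, Pi.single_eq_of_ne (Ne.symm hij)] at hmem
        exact hv (by rwa [sub_zero] at hmem)
      rw [hset]
      exact Measure.addHaar_submodule _ _ hker
    rw [ae_iff]
    apply measure_mono_null _ hnull
    intro y hy
    simp only [Set.mem_setOf_eq] at hy ⊢
    push_neg at hy
    exact hy.2

lemma chiM_confOf {d : ℕ} (a : ℝ) {m : ℕ} (y : Fin m → Pt d) :
    chiM d a (confOf y)
      = if (∀ i j : Fin m, cubeIdx d a (y i) = cubeIdx d a (y j) → y i = y j)
        then (1:ℝ) else 0 := by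
  unfold chiM confOf
  apply if_congr _ rfl rfl
  constructor
  · intro h i j hq
    exact h (y i) (Finset.mem_image_of_mem y (Finset.mem_univ i))
      (y j) (Finset.mem_image_of_mem y (Finset.mem_univ j)) hq
  · intro h x hx x' hx' hq
    obtain ⟨i, -, rfl⟩ := Finset.mem_image.mp hx
    obtain ⟨j, -, rfl⟩ := Finset.mem_image.mp hx'
    exact h i j hq

lemma confOf_subset {d m : ℕ} {Λ : Set (Pt d)} {y : Fin m → Pt d} (hy : ∀ i, y i ∈ Λ) :
    ↑(confOf y) ⊆ Λ := by
  intro x hx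
  obtain ⟨i, -, rfl⟩ := Finset.mem_image.mp hx
  exact hy i

lemma energy_confOf {d : ℕ} (φ : ℝ → ℝ) {m : ℕ} {y : Fin m → Pt d}
    (hy : ∀ i j : Fin m, i ≠ j → y i ≠ y j) :
    energy d φ (confOf y)
      = (∑ p ∈ (Finset.univ : Finset (Fin m)).offDiag, φ (dist (y p.1) (y p.2))) / 2 := by
  unfold energy
  congr 1
  symm
  apply Finset.sum_bij (i := fun (p : Fin m × Fin m) (_ : p ∈ (Finset.univ : Finset (Fin m)).offDiag)
    => ((y p.1, y p.2) : Pt d × Pt d))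
  · intro p hp
    have hne : p.1 ≠ p.2 := (Finset.mem_offDiag.mp hp).2.2
    rw [Finset.mem_offDiag]
    exact ⟨Finset.mem_image_of_mem y (Finset.mem_univ _),
      Finset.mem_image_of_mem y (Finset.mem_univ _), hy _ _ hne⟩
  · intro p hp p' hp' hee
    have h1 := congrArg Prod.fst hee
    have h2 := congrArg Prod.snd hee
    simp only at h1 h2
    have hinj : Function.Injective y := by
      intro i j hijy
      by_contra hne
      exact hy i j hne hijy
    exact Prod.ext (hinj h1) (hinj h2)
  · intro b hb
    rw [Finset.mem_offDiag] at hb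
    obtain ⟨i, -, hi⟩ := Finset.mem_image.mp hb.1
    obtain ⟨j, -, hj⟩ := Finset.mem_image.mp hb.2.1
    refine ⟨(i, j), Finset.mem_offDiag.mpr ⟨Finset.mem_univ _, Finset.mem_univ _, ?_⟩, ?_⟩
    · intro hij
      apply hb.2.2
      have hyij : y i = y j := congrArg y hij
      rw [← hi, ← hj]
      exact hyij
    · show (y i, y j) = b
      rw [hi, hj]
  · intro p hp
    rfl
lemma measurable_dilute {d : ℕ} (m : ℕ) (a : ℝ) :
    MeasurableSet {y : Fin m → Pt d |
      ∀ i j : Fin m, cubeIdx d a (y i) = cubeIdx d a (y j) → y i = y j} := by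
  have hset : {y : Fin m → Pt d | ∀ i j, cubeIdx d a (y i) = cubeIdx d a (y j) → y i = y j}
      = ⋂ i, ⋂ j, ({y : Fin m → Pt d | cubeIdx d a (y i) = cubeIdx d a (y j)}ᶜ
        ∪ {y : Fin m → Pt d | y i = y j}) := by
    ext y
    simp only [Set.mem_iInter, Set.mem_setOf_eq, Set.mem_union, Set.mem_compl_iff]
    constructor
    · intro h i j
      by_cases hq : cubeIdx d a (y i) = cubeIdx d a (y j)
      · exact Or.inr (h i j hq)
      · exact Or.inl hq
    · intro h i j hq
      rcases h i j with h' | h'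
      · exact absurd hq h'
      · exact h'
  rw [hset]
  apply MeasurableSet.iInter; intro i
  apply MeasurableSet.iInter; intro j
  apply MeasurableSet.union
  · apply MeasurableSet.compl
    have hq : {y : Fin m → Pt d | cubeIdx d a (y i) = cubeIdx d a (y j)}
        = ⋂ k : Fin d, {y : Fin m → Pt d | (⌊(y i k)/a + 1/2⌋ : ℤ) = ⌊(y j k)/a + 1/2⌋} := by
      ext y
      simp only [Set.mem_iInter, Set.mem_setOf_eq, cubeIdx, funext_iff]
    rw [hq]
    apply MeasurableSet.iInter; intro k
    have hmeas : ∀ i : Fin m, Measurable fun y : Fin m → Pt d => (⌊(y i k)/a + 1/2⌋ : ℤ) := by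
      intro i
      have h0 : Measurable fun y : Fin m → Pt d => y i := measurable_pi_apply i
      have hk : Measurable fun x : Pt d => (x k : ℝ) := ((continuous_apply k).comp (PiLp.continuous_ofLp 2 _)).measurable
      have h1 : Measurable fun y : Fin m → Pt d => (y i k : ℝ) := hk.comp h0
      exact ((h1.div_const a).add_const (1/2)).floor
    exact measurableSet_eq_fun (hmeas i) (hmeas j)
  · exact (isClosed_eq (continuous_apply i) (continuous_apply j)).measurableSet

lemma chiM_mem_Icc {d : ℕ} (a : ℝ) (γ : Finset (Pt d)) : chiM d a γ ∈ Set.Icc (0:ℝ) 1 := by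
  unfold chiM; split <;> norm_num

/-- A.e. strong measurability of the Boltzmann-factor integrands. -/
lemma aesm_exp_mul {d : ℕ} (hd : 1 ≤ d) (φ : ℝ → ℝ) (hcont : ContinuousOn φ (Set.Ioi 0))
    (β : ℝ) {m : ℕ} (μ : Measure (Fin m → Pt d)) (hμ : μ ≪ volume) (a : ℝ) :
    AEStronglyMeasurable
      (fun y : Fin m → Pt d => Real.exp (-β * energy d φ (confOf y)) * chiM d a (confOf y)) μ
    ∧ AEStronglyMeasurable
      (fun y : Fin m → Pt d => Real.exp (-β * energy d φ (confOf y))) μ := by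
  classical
  set φt : ℝ → ℝ := (Set.Ioi (0:ℝ)).piecewise φ (fun _ => 0) with hφt
  have hφtm : Measurable φt :=
    hcont.measurable_piecewise continuousOn_const measurableSet_Ioi
  have hagree : ∀ t : ℝ, 0 < t → φt t = φ t := fun t ht =>
    Set.piecewise_eq_of_mem _ _ _ ht
  set g : (Fin m → Pt d) → ℝ := fun y =>
    Real.exp (-β * ((∑ p ∈ (Finset.univ : Finset (Fin m)).offDiag,
      φt (dist (y p.1) (y p.2))) / 2)) with hg
  have hgm : Measurable g := by
    apply Measurable.exp
    apply Measurable.const_mul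
    apply Measurable.div_const
    apply Finset.measurable_sum
    intro p _
    exact hφtm.comp ((continuous_apply p.1).dist (continuous_apply p.2)).measurable
  have hae : (fun y : Fin m → Pt d => Real.exp (-β * energy d φ (confOf y))) =ᵐ[μ] g := by
    filter_upwards [(ae_pairwise_ne d hd m).filter_mono hμ.ae_le] with y hy
    rw [energy_confOf φ hy, hg]
    have hsums : (∑ p ∈ (Finset.univ : Finset (Fin m)).offDiag, φ (dist (y p.1) (y p.2)))
        = ∑ p ∈ (Finset.univ : Finset (Fin m)).offDiag, φt (dist (y p.1) (y p.2)) := by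
      apply Finset.sum_congr rfl
      intro p hp
      have hne : p.1 ≠ p.2 := (Finset.mem_offDiag.mp hp).2.2
      exact (hagree _ (dist_pos.mpr (hy _ _ hne))).symm
    rw [hsums]
  constructor
  · have hgim : Measurable fun y : Fin m → Pt d =>
        g y * (if (∀ i j : Fin m, cubeIdx d a (y i) = cubeIdx d a (y j) → y i = y j)
          then (1:ℝ) else 0) :=
      hgm.mul (Measurable.ite (measurable_dilute m a) measurable_const measurable_const)
    apply hgim.aestronglyMeasurable.congr
    filter_upwards [hae] with y h
    rw [chiM_confOf, ← h]
  · exact hgm.aestronglyMeasurable.congr hae.symm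

lemma exp_energy_le {d : ℕ} (φ : ℝ → ℝ) {β C₀ : ℝ} (hβ : 0 ≤ β) {Λ : Set (Pt d)}
    (hstab : ∀ γ : Finset (Pt d), ↑γ ⊆ Λ → -C₀ ≤ energy d φ γ)
    {m : ℕ} {y : Fin m → Pt d} (hy : ∀ i, y i ∈ Λ) :
    Real.exp (-β * energy d φ (confOf y)) ≤ Real.exp (β * C₀) := by
  apply Real.exp_le_exp.mpr
  have h := hstab (confOf y) (confOf_subset hy)
  nlinarith [mul_le_mul_of_nonneg_left (neg_le.mpr h) hβ]

/-- Uniform bound for the weighted integrals. -/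
lemma term_norm_bound {d : ℕ} (hd : 1 ≤ d) (φ : ℝ → ℝ)
    (hcont : ContinuousOn φ (Set.Ioi 0)) {β C₀ : ℝ} (hβ : 0 ≤ β) {Λ : Set (Pt d)}
    (hΛb : Bornology.IsBounded Λ) (hΛm : MeasurableSet Λ)
    (hstab : ∀ γ : Finset (Pt d), ↑γ ⊆ Λ → -C₀ ≤ energy d φ γ)
    (m : ℕ) (w : Finset (Pt d) → ℝ) (hw : ∀ γ, w γ ∈ Set.Icc (0:ℝ) 1)
    (hwm : AEStronglyMeasurable (fun y : Fin m → Pt d =>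
      Real.exp (-β * energy d φ (confOf y)) * w (confOf y))
      (volume.restrict {y : Fin m → Pt d | ∀ i, y i ∈ Λ})) :
    ‖∫ y in {y : Fin m → Pt d | ∀ i, y i ∈ Λ},
        Real.exp (-β * energy d φ (confOf y)) * w (confOf y)‖
      ≤ Real.exp (β * C₀) * ((volume Λ).toReal) ^ m := by
  have hSfin : volume {y : Fin m → Pt d | ∀ i, y i ∈ Λ} < ⊤ := by
    rw [volS]
    exact ENNReal.pow_lt_top hΛb.measure_lt_top
  have hbd : ∀ᵐ y ∂(volume.restrict {y : Fin m → Pt d | ∀ i, y i ∈ Λ}),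
      ‖Real.exp (-β * energy d φ (confOf y)) * w (confOf y)‖ ≤ Real.exp (β * C₀) := by
    rw [ae_restrict_iff' (measS m hΛm)]
    apply ae_of_all
    intro y hy
    have h1 := exp_energy_le φ hβ hstab hy
    have h2 := hw (confOf y)
    rw [Real.norm_eq_abs, abs_mul, abs_of_nonneg (Real.exp_pos _).le,
      abs_of_nonneg h2.1]
    calc Real.exp (-β * energy d φ (confOf y)) * w (confOf y)
        ≤ Real.exp (-β * energy d φ (confOf y)) * 1 :=
          mul_le_mul_of_nonneg_left h2.2 (Real.exp_pos _).le
      _ = Real.exp (-β * energy d φ (confOf y)) := mul_one _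
      _ ≤ Real.exp (β * C₀) := h1
  have hint : Integrable (fun _ : Fin m → Pt d => Real.exp (β * C₀))
      (volume.restrict {y : Fin m → Pt d | ∀ i, y i ∈ Λ}) :=
    integrableOn_const hSfin.ne
  calc ‖∫ y in {y : Fin m → Pt d | ∀ i, y i ∈ Λ},
        Real.exp (-β * energy d φ (confOf y)) * w (confOf y)‖
      ≤ ∫ _ in {y : Fin m → Pt d | ∀ i, y i ∈ Λ}, Real.exp (β * C₀) :=
        norm_integral_le_of_norm_le hint hbd
    _ = ((volume {y : Fin m → Pt d | ∀ i, y i ∈ Λ}).toReal) • Real.exp (β * C₀) :=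
        setIntegral_const _
    _ ≤ Real.exp (β * C₀) * ((volume Λ).toReal) ^ m := by
        rw [volS, smul_eq_mul, mul_comm, ENNReal.toReal_pow]

set_option maxHeartbeats 2000000 in
/-- Convergence of a single term as `a → 0⁺`. -/
lemma term_tendsto {d : ℕ} (hd : 1 ≤ d) (φ : ℝ → ℝ)
    (hcont : ContinuousOn φ (Set.Ioi 0)) {β C₀ : ℝ} (hβ : 0 ≤ β) {Λ : Set (Pt d)}
    (hΛb : Bornology.IsBounded Λ) (hΛm : MeasurableSet Λ)
    (hstab : ∀ γ : Finset (Pt d), ↑γ ⊆ Λ → -C₀ ≤ energy d φ γ) (m : ℕ) :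
    Tendsto (fun a : ℝ => ∫ y in {y : Fin m → Pt d | ∀ i, y i ∈ Λ},
        Real.exp (-β * energy d φ (confOf y)) * chiM d a (confOf y)) (𝓝[>] (0:ℝ))
      (𝓝 (∫ y in {y : Fin m → Pt d | ∀ i, y i ∈ Λ},
        Real.exp (-β * energy d φ (confOf y)))) := by
  have hSfin : volume {y : Fin m → Pt d | ∀ i, y i ∈ Λ} < ⊤ := by
    rw [volS]
    exact ENNReal.pow_lt_top hΛb.measure_lt_top
  have hac : volume.restrict {y : Fin m → Pt d | ∀ i, y i ∈ Λ} ≪ (volume : Measure (Fin m → Pt d)) :=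
    Measure.restrict_le_self.absolutelyContinuous
  apply tendsto_integral_filter_of_dominated_convergence
    (bound := fun _ : Fin m → Pt d => Real.exp (β * C₀))
  · apply Filter.Eventually.of_forall
    intro a
    exact (aesm_exp_mul hd φ hcont β _ hac a).1
  · apply Filter.Eventually.of_forall
    intro a
    rw [ae_restrict_iff' (measS m hΛm)]
    apply ae_of_all
    intro y hy
    have h1 := exp_energy_le φ hβ hstab hy
    have h2 := chiM_mem_Icc a (confOf y)
    rw [Real.norm_eq_abs, abs_mul, abs_of_nonneg (Real.exp_pos _).le, abs_of_nonneg h2.1]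
    calc Real.exp (-β * energy d φ (confOf y)) * chiM d a (confOf y)
        ≤ Real.exp (-β * energy d φ (confOf y)) * 1 :=
          mul_le_mul_of_nonneg_left h2.2 (Real.exp_pos _).le
      _ = Real.exp (-β * energy d φ (confOf y)) := mul_one _
      _ ≤ Real.exp (β * C₀) := h1
  · exact integrableOn_const hSfin.ne
  · filter_upwards [(ae_pairwise_ne d hd m).filter_mono hac.ae_le] with y hy
    classical
    obtain ⟨δ₀, hδpos, hδle⟩ : ∃ δ₀ : ℝ, 0 < δ₀ ∧
        ∀ i j : Fin m, i ≠ j → δ₀ ≤ dist (y i) (y j) := by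
      rcases Finset.eq_empty_or_nonempty ((Finset.univ : Finset (Fin m)).offDiag) with he | hne
      · refine ⟨1, one_pos, fun i j hij => ?_⟩
        exfalso
        have hmem : (i, j) ∈ (Finset.univ : Finset (Fin m)).offDiag :=
          Finset.mem_offDiag.mpr ⟨Finset.mem_univ _, Finset.mem_univ _, hij⟩
        rw [he] at hmem
        exact absurd hmem (Finset.notMem_empty _)
      · obtain ⟨b, hb, hmin⟩ := Finset.exists_min_image _
          (fun p => dist (y p.1) (y p.2)) hne
        refine ⟨dist (y b.1) (y b.2),
          dist_pos.mpr (hy _ _ (Finset.mem_offDiag.mp hb).2.2), fun i j hij => ?_⟩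
        exact hmin (i, j)
          (Finset.mem_offDiag.mpr ⟨Finset.mem_univ _, Finset.mem_univ _, hij⟩)
    have hsq1 : (0:ℝ) < Real.sqrt d + 1 := by positivity
    apply Tendsto.congr' _ (tendsto_const_nhds (x := Real.exp (-β * energy d φ (confOf y))))
    have hmemIoo : Set.Ioo (0:ℝ) (δ₀ / (Real.sqrt d + 1)) ∈ 𝓝[>] (0:ℝ) :=
      Ioo_mem_nhdsGT_of_mem ⟨le_refl 0, by positivity⟩
    filter_upwards [hmemIoo] with a ha
    have hapos : 0 < a := ha.1
    have hcond : ∀ i j : Fin m, cubeIdx d a (y i) = cubeIdx d a (y j) → y i = y j := by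
      intro i j hq
      by_contra hne
      have hij : i ≠ j := fun h => hne (by rw [h])
      have h1 := same_cube_dist hapos hq
      have h2 := hδle i j hij
      have h3 : a * Real.sqrt d < δ₀ := by
        have h4 : a * (Real.sqrt d + 1) < δ₀ := by
          rw [← lt_div_iff₀ hsq1]
          exact ha.2
        nlinarith [Real.sqrt_nonneg (d:ℝ)]
      linarith
    rw [chiM_confOf, if_pos hcond, mul_one]
/-- Lemma 4.2.  Under Assumption (A) with `s > d`, for fixed `z, β > 0` and a
bounded measurable `Λ ⊂ ℝ^d`, `lim_{a→0⁺} Z_Λ^{(-)}(z,β,a)/Z_Λ(z,β) = 1`. -/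
theorem partition_function_ratio_limit (d : ℕ) (hd : 1 ≤ d) (φ : ℝ → ℝ)
    (r₀ R φ₀ φ₁ ε₀ s : ℝ) (hA : AssumptionA d φ r₀ R φ₀ φ₁ ε₀ s) (hs : (d : ℝ) < s)
    (z β : ℝ) (hz : 0 < z) (hβ : 0 < β)
    (Λ : Set (Pt d)) (hΛb : Bornology.IsBounded Λ) (hΛm : MeasurableSet Λ) :
    Tendsto (fun a : ℝ => ZΛm d φ z β a Λ / ZΛ d φ z β Λ) (𝓝[>] (0 : ℝ)) (𝓝 1) := by
  classical
  obtain ⟨C₀, hC₀, hstab⟩ := energy_lower_bound d hd φ r₀ R φ₀ φ₁ ε₀ s hA hs Λ hΛb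
  set V : ℝ := (volume Λ).toReal with hV
  have hV0 : 0 ≤ V := ENNReal.toReal_nonneg
  set E₀ : ℝ := Real.exp (β * C₀) with hE₀
  have hE₀0 : 0 < E₀ := Real.exp_pos _
  have hcn : ∀ n : ℕ, 0 < z ^ (n+1) / ((n+1).factorial : ℝ) := by
    intro n
    apply div_pos (pow_pos hz _)
    exact_mod_cast Nat.factorial_pos _
  have hsum : Summable (fun n : ℕ =>
      (z ^ (n+1) / ((n+1).factorial : ℝ)) * (E₀ * V^(n+1))) := by
    have h1 : Summable (fun n : ℕ => (z*V)^n / (n.factorial : ℝ)) :=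
      Real.summable_pow_div_factorial (z*V)
    have h2 : Summable (fun n : ℕ => (z*V)^(n+1) / ((n+1).factorial : ℝ)) := by
      exact (summable_nat_add_iff 1).mpr h1
    apply Summable.congr (h2.mul_left E₀)
    intro n
    rw [mul_pow]
    field_simp
  have haesm : ∀ a : ℝ, ∀ m : ℕ, AEStronglyMeasurable
      (fun y : Fin m → Pt d => Real.exp (-β * energy d φ (confOf y)) * chiM d a (confOf y))
      (volume.restrict {y : Fin m → Pt d | ∀ i, y i ∈ Λ}) := by
    intro a m
    exact (aesm_exp_mul hd φ hA.cont β _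
      Measure.restrict_le_self.absolutelyContinuous a).1
  have hZm_tendsto : Tendsto (fun a : ℝ => ZΛm d φ z β a Λ) (𝓝[>] (0:ℝ))
      (𝓝 (ZΛ d φ z β Λ)) := by
    simp only [ZΛm, ZΛ, ZW, mul_one]
    apply Tendsto.const_add
    apply tendsto_tsum_of_dominated_convergence hsum
    · intro n
      exact (term_tendsto hd φ hA.cont hβ.le hΛb hΛm hstab (n+1)).const_mul _
    · apply Filter.Eventually.of_forall
      intro a n
      have hb := term_norm_bound hd φ hA.cont hβ.le hΛb hΛm hstab (n+1)
        (chiM d a) (chiM_mem_Icc a) (haesm a (n+1))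
      have hcn' := (hcn n).le
      have h1 : ‖z ^ (n+1) / ((n+1).factorial : ℝ)‖ = z ^ (n+1) / ((n+1).factorial : ℝ) := by
        rw [Real.norm_eq_abs, abs_of_nonneg hcn']
      rw [norm_mul, h1]
      exact mul_le_mul_of_nonneg_left hb hcn'
  have hZ1 : (1:ℝ) ≤ ZΛ d φ z β Λ := by
    simp only [ZΛ, ZW, mul_one]
    have hts : 0 ≤ ∑' n : ℕ, (z ^ (n+1) / ((n+1).factorial : ℝ)) *
        ∫ y in {y : Fin (n+1) → Pt d | ∀ i, y i ∈ Λ},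
          Real.exp (-β * energy d φ (confOf y)) := by
      apply tsum_nonneg
      intro n
      apply mul_nonneg (hcn n).le
      apply setIntegral_nonneg (measS (n+1) hΛm)
      intro y _
      positivity
    linarith
  have hZne : ZΛ d φ z β Λ ≠ 0 := by linarith
  have hfin := hZm_tendsto.div_const (ZΛ d φ z β Λ)
  rwa [div_self hZne] at hfin
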